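/- Let M(X,S) be the structure monoid of a non-degenerate symmetric solution with Garside element Δ. If a divides Δ and x ∈ X is such that xa does not divide Δ, then there exist y ∈ X and b dividing Δ with a = y·b in M(X,S) and (x,y) a frozen pair. -/

import Mathlib

/-- The defining relations of the structure monoid: `x y = g_x(y) f_y(x)`. -/
def structRel {X : Type*} (g f : X → X → X) :
    FreeMonoid X → FreeMonoid X → Prop :=
  fun a b => ∃ x y : X, a = FreeMonoid.of x * FreeMonoid.of y ∧
    b = FreeMonoid.of (g x y) * FreeMonoid.of (f y x)

/-- `S` acting on the first two components of `X³`. -/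
def S12 {X : Type*} (S : X × X → X × X) : X × X × X → X × X × X :=
  fun p => ((S (p.1, p.2.1)).1, (S (p.1, p.2.1)).2, p.2.2)

/-- `S` acting on the last two components of `X³`. -/
def S23 {X : Type*} (S : X × X → X × X) : X × X × X → X × X × X :=
  fun p => (p.1, (S (p.2.1, p.2.2)).1, (S (p.2.1, p.2.2)).2)

/-- The braid relation `S¹²S²³S¹² = S²³S¹²S²³`. -/
def Braided {X : Type*} (S : X × X → X × X) : Prop :=
  S12 S ∘ S23 S ∘ S12 S = S23 S ∘ S12 S ∘ S23 S

namespace Stmt9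

/-- Semidirect-product-like monoid recording the multiset of letters and a permutation. -/
abbrev LamM (X : Type*) := Multiset X × (X → X)

instance instLamM (X : Type*) : Monoid (LamM X) where
  mul p q := (p.1 + q.1.map p.2, p.2 ∘ q.2)
  one := ((0 : Multiset X), id)
  mul_assoc a b c := by
    refine Prod.ext ?_ rfl
    show (a.1 + b.1.map a.2) + c.1.map (a.2 ∘ b.2) = a.1 + (b.1 + c.1.map b.2).map a.2
    rw [Multiset.map_add, Multiset.map_map, add_assoc]
  one_mul p := Prod.ext (by show (0 : Multiset X) + p.1.map id = p.1; simp) rfl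
  mul_one p := Prod.ext (by show p.1 + (0 : Multiset X).map p.2 = p.1; simp) rfl

lemma mul_fst {X : Type*} (p q : LamM X) : (p * q).1 = p.1 + q.1.map p.2 := rfl
lemma one_fst {X : Type*} : (1 : LamM X).1 = 0 := rfl

variable {X : Type*} {g f : X → X → X}

/-- the defining relation, as an equality in the presented monoid -/
lemma rel_eq (x y : X) :
    PresentedMonoid.of (structRel g f) x * PresentedMonoid.of (structRel g f) y
      = PresentedMonoid.of (structRel g f) (g x y) *
          PresentedMonoid.of (structRel g f) (f y x) :=
  Quotient.sound (ConGen.Rel.of _ _ ⟨x, y, rfl, rfl⟩)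

/-- The `I-structure` homomorphism. -/
def mkLam (g f : X → X → X)
    (h1 : ∀ t z : X, g (g t z) (f z t) = t)
    (h3 : ∀ p q r : X, g (g p q) (g (f q p) r) = g p (g q r)) :
    PresentedMonoid (structRel g f) →* LamM X :=
  PresentedMonoid.lift (fun x => (({x} : Multiset X), g x)) (by
    rintro a b ⟨x, y, rfl, rfl⟩
    rw [map_mul, map_mul]
    simp only [FreeMonoid.lift_eval_of]
    refine Prod.ext ?_ (funext fun z => (h3 x y z).symm)
    show ({x} : Multiset X) + Multiset.map (g x) {y}
        = {g x y} + Multiset.map (g (g x y)) {f y x}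
    rw [Multiset.map_singleton, Multiset.map_singleton, h1, add_comm])

section withLam

variable (hg : ∀ x : X, Function.Bijective (g x))
  (Λ : PresentedMonoid (structRel g f) →* LamM X)
  (hΛ : ∀ x : X, Λ (PresentedMonoid.of (structRel g f) x) = (({x} : Multiset X), g x))

include hΛ in
lemma lam_of_mul (x : X) (m : PresentedMonoid (structRel g f)) :
    (Λ (PresentedMonoid.of (structRel g f) x * m)).1 = {x} + ((Λ m).1).map (g x) := by
  rw [map_mul, mul_fst, hΛ]

include hΛ in
lemma exists_factor (m : PresentedMonoid (structRel g f)) :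
    ∀ z : X, z ∈ (Λ m).1 → ∃ v, m = PresentedMonoid.of (structRel g f) z * v := by
  induction m using PresentedMonoid.inductionOn with
  | h w =>
  induction w using FreeMonoid.recOn with
  | one =>
    intro z hz
    have : (Λ (PresentedMonoid.mk (structRel g f) 1)).1 = 0 := by
      rw [map_one, map_one, one_fst]
    rw [this] at hz
    exact absurd hz (Multiset.notMem_zero z)
  | of_mul x w ih =>
    intro z hz
    rw [map_mul] at hz ⊢
    have hofx : PresentedMonoid.mk (structRel g f) (FreeMonoid.of x)
        = PresentedMonoid.of (structRel g f) x := rfl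
    rw [hofx] at hz ⊢
    rw [lam_of_mul Λ hΛ] at hz
    rcases Multiset.mem_add.mp hz with h1 | h2
    · exact ⟨PresentedMonoid.mk _ w, by rw [Multiset.mem_singleton.mp h1]⟩
    · obtain ⟨z₀, hz₀, hgz⟩ := Multiset.mem_map.mp h2
      obtain ⟨v₀, hv₀⟩ := ih z₀ hz₀
      refine ⟨PresentedMonoid.of (structRel g f) (f z₀ x) * v₀, ?_⟩
      rw [hv₀, ← mul_assoc, rel_eq, hgz, mul_assoc]

include hΛ in
lemma eq_one_of_lam (m : PresentedMonoid (structRel g f)) (h : (Λ m).1 = 0) : m = 1 := by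
  induction m using PresentedMonoid.inductionOn with
  | h w =>
  induction w using FreeMonoid.recOn with
  | one => exact map_one _
  | of_mul x w _ =>
    exfalso
    have hofx : PresentedMonoid.mk (structRel g f) (FreeMonoid.of x)
        = PresentedMonoid.of (structRel g f) x := rfl
    rw [map_mul, hofx, lam_of_mul Λ hΛ, Multiset.singleton_add] at h
    exact Multiset.cons_ne_zero h

include hg hΛ in
lemma lam_injective : ∀ (n : ℕ) (m m' : PresentedMonoid (structRel g f)),
    ((Λ m).1).card = n → (Λ m).1 = (Λ m').1 → m = m' := by
  intro n
  induction n with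
  | zero =>
    intro m m' hc he
    have h0 : (Λ m).1 = 0 := Multiset.card_eq_zero.mp hc
    have h0' : (Λ m').1 = 0 := by rw [← he]; exact h0
    rw [eq_one_of_lam Λ hΛ m h0, eq_one_of_lam Λ hΛ m' h0']
  | succ n ih =>
    intro m m' hc he
    have hne : (Λ m).1 ≠ 0 := by intro h; rw [h] at hc; simp at hc
    obtain ⟨z, hz⟩ := Multiset.exists_mem_of_ne_zero hne
    have hz' : z ∈ (Λ m').1 := he ▸ hz
    obtain ⟨u, rfl⟩ := exists_factor Λ hΛ m z hz
    obtain ⟨u', rfl⟩ := exists_factor Λ hΛ m' z hz'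
    rw [lam_of_mul Λ hΛ, lam_of_mul Λ hΛ] at he
    rw [lam_of_mul Λ hΛ] at hc
    have hmap := add_left_cancel he
    have huu : (Λ u).1 = (Λ u').1 := Multiset.map_injective (hg z).1 hmap
    have hcard : ((Λ u).1).card = n := by
      simp only [Multiset.card_add, Multiset.card_singleton, Multiset.card_map] at hc
      omega
    rw [ih u u' hcard huu]

include hg hΛ in
lemma lam_surjective : ∀ (n : ℕ) (s : Multiset X), s.card = n →
    ∃ m : PresentedMonoid (structRel g f), (Λ m).1 = s := by
  intro n
  induction n with
  | zero =>
    intro s hs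
    exact ⟨1, by rw [map_one, one_fst, Multiset.card_eq_zero.mp hs]⟩
  | succ n ih =>
    intro s hs
    have hne : s ≠ 0 := by intro h; rw [h] at hs; simp at hs
    obtain ⟨x, hx⟩ := Multiset.exists_mem_of_ne_zero hne
    obtain ⟨t, rfl⟩ := Multiset.exists_cons_of_mem hx
    have hct : (t.map (Function.surjInv (hg x).2)).card = n := by
      simp only [Multiset.card_map]
      have := hs
      simp only [Multiset.card_cons] at this
      omega
    obtain ⟨c, hc⟩ := ih _ hct
    refine ⟨PresentedMonoid.of (structRel g f) x * c, ?_⟩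
    rw [lam_of_mul Λ hΛ, hc, Multiset.map_map]
    have ht : Multiset.map (g x ∘ Function.surjInv (hg x).2) t = Multiset.map id t :=
      Multiset.map_congr rfl (fun a _ => Function.rightInverse_surjInv (hg x).2 a)
    rw [ht, Multiset.map_id, Multiset.singleton_add]

set_option linter.unusedSectionVars false in
include hΛ in
lemma lam_le_of_dvd {m m' : PresentedMonoid (structRel g f)} (h : m ∣ m') :
    (Λ m).1 ≤ (Λ m').1 := by
  obtain ⟨c, rfl⟩ := h
  rw [map_mul, mul_fst]
  exact Multiset.le_add_right _ _

include hg hΛ in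
lemma dvd_of_lam_le : ∀ (n : ℕ) (m m' : PresentedMonoid (structRel g f)),
    ((Λ m).1).card = n → (Λ m).1 ≤ (Λ m').1 → m ∣ m' := by
  intro n
  induction n with
  | zero =>
    intro m m' hc _
    rw [eq_one_of_lam Λ hΛ m (Multiset.card_eq_zero.mp hc)]
    exact one_dvd _
  | succ n ih =>
    intro m m' hc hle
    have hne : (Λ m).1 ≠ 0 := by intro h; rw [h] at hc; simp at hc
    obtain ⟨z, hz⟩ := Multiset.exists_mem_of_ne_zero hne
    have hz' : z ∈ (Λ m').1 := Multiset.mem_of_le hle hz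
    obtain ⟨u, rfl⟩ := exists_factor Λ hΛ m z hz
    obtain ⟨u', rfl⟩ := exists_factor Λ hΛ m' z hz'
    rw [lam_of_mul Λ hΛ, lam_of_mul Λ hΛ] at hle
    rw [lam_of_mul Λ hΛ] at hc
    have hle' : (Λ u).1 ≤ (Λ u').1 :=
      (Multiset.map_le_map_iff (hg z).1).mp ((add_le_add_iff_left _).mp hle)
    have hcard : ((Λ u).1).card = n := by
      simp only [Multiset.card_add, Multiset.card_singleton, Multiset.card_map] at hc
      omega
    exact mul_dvd_mul_left _ (ih u u' hcard hle')

end withLam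

lemma nodup_le_univ {X : Type*} [Fintype X] {s : Multiset X} (h : s.Nodup) :
    s ≤ Finset.univ.val := by
  classical
  rw [Multiset.le_iff_count]
  intro a
  rw [Multiset.count_univ]
  exact Multiset.nodup_iff_count_le_one.mp h a

end Stmt9

open Stmt9 in
theorem stmt_9 {X : Type*} [Fintype X]
    (S : X × X → X × X) (g f : X → X → X)
    (hS : ∀ x y : X, S (x, y) = (g x y, f y x))
    (hg : ∀ x : X, Function.Bijective (g x))
    (hf : ∀ x : X, Function.Bijective (f x))
    (hinv : ∀ p : X × X, S (S p) = p)
    (hbr : Braided S)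
    (Δ : PresentedMonoid (structRel g f))
    (hΔdvd : ∀ x : X, PresentedMonoid.of (structRel g f) x ∣ Δ)
    (hΔlcm : ∀ m : PresentedMonoid (structRel g f),
      (∀ x : X, PresentedMonoid.of (structRel g f) x ∣ m) → Δ ∣ m)
    (a : PresentedMonoid (structRel g f)) (x : X)
    (ha : a ∣ Δ) (hxa : ¬(PresentedMonoid.of (structRel g f) x * a ∣ Δ)) :
    ∃ (y : X) (b : PresentedMonoid (structRel g f)),
      b ∣ Δ ∧ a = PresentedMonoid.of (structRel g f) y * b ∧ S (x, y) = (x, y) := by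
  classical
  have hSS : ∀ x y : X, (g (g x y) (f y x), f (f y x) (g x y)) = (x, y) := by
    intro x y
    have h := hinv (x, y)
    rwa [hS x y, hS (g x y) (f y x)] at h
  have h1 : ∀ x y : X, g (g x y) (f y x) = x := fun x y => congrArg Prod.fst (hSS x y)
  have h3 : ∀ p q r : X, g (g p q) (g (f q p) r) = g p (g q r) := by
    intro p q r
    have hb := congrFun hbr (p, q, r)
    simp only [Function.comp_apply, S12, S23, hS] at hb
    exact congrArg (fun t => t.1) hb
  set Λ : PresentedMonoid (structRel g f) →* LamM X := mkLam g f h1 h3 with hΛdef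
  have hΛof : ∀ z : X, Λ (PresentedMonoid.of (structRel g f) z) = (({z} : Multiset X), g z) :=
    fun z => rfl
  -- the Garside element has λ-value the full multiset
  obtain ⟨θ, hθ⟩ := lam_surjective hg Λ hΛof (Finset.univ.val (α := X)).card Finset.univ.val rfl
  have hΔθ : Δ ∣ θ := by
    refine hΔlcm θ (fun z => ?_)
    obtain ⟨v, hv⟩ := exists_factor Λ hΛof θ z
      (by rw [hθ]; exact Finset.mem_val.mpr (Finset.mem_univ z))
    exact ⟨v, hv⟩
  have hΔle : (Λ Δ).1 ≤ Finset.univ.val := by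
    have := lam_le_of_dvd Λ hΛof hΔθ
    rwa [hθ] at this
  have hΔge : Finset.univ.val ≤ (Λ Δ).1 := by
    rw [Multiset.le_iff_count]
    intro z
    rw [Multiset.count_univ]
    have hz : z ∈ (Λ Δ).1 := by
      obtain ⟨d, hd⟩ := hΔdvd z
      rw [hd, lam_of_mul Λ hΛof]
      exact Multiset.mem_add.mpr (Or.inl (Multiset.mem_singleton_self z))
    exact Multiset.count_pos.mpr hz
  have hΔΛ : (Λ Δ).1 = Finset.univ.val := le_antisymm hΔle hΔge
  have haL : (Λ a).1 ≤ Finset.univ.val := by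
    have := lam_le_of_dvd Λ hΛof ha
    rwa [hΔΛ] at this
  have haN : ((Λ a).1).Nodup := Multiset.nodup_of_le haL Finset.univ.nodup
  -- find the frozen letter
  have hexy : ∃ y ∈ (Λ a).1, g x y = x := by
    by_contra hno
    push_neg at hno
    apply hxa
    refine dvd_of_lam_le hg Λ hΛof _ _ _ rfl ?_
    rw [lam_of_mul Λ hΛof, hΔΛ]
    apply nodup_le_univ
    rw [Multiset.singleton_add]
    refine Multiset.nodup_cons.mpr ⟨?_, haN.map (hg x).1⟩
    intro hmem
    obtain ⟨z, hz, hgz⟩ := Multiset.mem_map.mp hmem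
    exact hno z hz hgz
  obtain ⟨y, hy, hgxy⟩ := hexy
  have hfyx : f y x = y := by
    have h := h1 x y
    rw [hgxy] at h
    exact (hg x).1 (h.trans hgxy.symm)
  have hSxy : S (x, y) = (x, y) := by rw [hS x y, hgxy, hfyx]
  obtain ⟨b, hb⟩ := exists_factor Λ hΛof a y hy
  have hbN : ((Λ b).1).Nodup := by
    have hmapN : (((Λ b).1).map (g y)).Nodup := by
      refine Multiset.nodup_of_le ?_ haN
      rw [hb, lam_of_mul Λ hΛof]
      exact Multiset.le_add_left _ _
    exact Multiset.Nodup.of_map (g y) hmapN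
  have hbΔ : b ∣ Δ := by
    refine dvd_of_lam_le hg Λ hΛof _ _ _ rfl ?_
    rw [hΔΛ]
    exact nodup_le_univ hbN
  exact ⟨y, b, hbΔ, hb, hSxy⟩
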